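/- arXiv:2006.04615 — 3 statements merged into one kernel-verified Lean document; each statement's English description precedes it below -/
import Mathlib

section
/- Let A be a C*-algebra and (J_i)_{i∈I} a family of closed two-sided ideals of A such that ⋂_{i∈I} J_i = {0} and such that, for each a ∈ A, the function i ↦ ‖a + J_i‖ tends to 0 along the cofinite filter on I. Let B = ⊕_{i∈I} A/J_i be the c0-direct sum and η : A → B the *-homomorphism η(a) = (a + J_i)_{i∈I}. Then the image η(A) is a nondegenerate subalgebra of B: the closed linear span of {η(a)·b : a ∈ A, b ∈ B} is all of B. Equivalently, for every b ∈ B and every ε > 0 there exists a ∈ A with ‖η(a)·b − b‖ < ε. -/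
/-!
STATEMENT 1.

With `A`, `(J i)` as in Statement 0 and `B = ⊕_i A/J i` the c₀-direct sum, the
image of the *-homomorphism `η : a ↦ (a + J i)_i` is a nondegenerate subalgebra
of `B` : for every `b ∈ B` and `ε > 0` there is `a : A` with `‖η(a)·b - b‖ < ε`.

Elements of the c₀-direct sum `B` are encoded by families `b : ι → A` of
representatives whose quotient norms `infDist (b i) (J i)` tend to `0` along
the cofinite filter (every element of `B` arises this way).  The `i`-th
component of `η(a)·b - b` is the class of `a * b i - b i` in `A / J i`, whose
quotient norm is `infDist (a * b i - b i) (J i)`; the statement `‖η(a)·b - b‖ < ε`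
(a supremum over `i`) is rendered as `∀ i, infDist (a * b i - b i) (J i) < ε`,
which is equivalent since `ε > 0` is arbitrary.
-/

open Metric Filter Topology

open scoped Unitization in
/-- Finite approximate unit: for any finite family of elements there is `a` of norm at most one
with `‖a * x - x‖ < ε` for each element `x` of the family. -/
lemma exists_approx_unit_finset {ι : Type*} {A : Type*} [NonUnitalCStarAlgebra A]
    (S : Finset ι) (b : ι → A) {ε : ℝ} (hε : 0 < ε) :
    ∃ a : A, ‖a‖ ≤ 1 ∧ ∀ i ∈ S, ‖a * b i - b i‖ < ε := by
  classical
  letI : PartialOrder (Unitization ℂ A) := CStarAlgebra.spectralOrder _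
  letI : StarOrderedRing (Unitization ℂ A) := CStarAlgebra.spectralOrderedRing _
  set c : ℝ := (ε / 2) ^ 2 with hc
  have hc0 : (0 : ℝ) < c := by positivity
  set g : ℝ → ℝ := fun t => t / (|t| + c) with hg
  have hgc : Continuous g := by
    apply continuous_id.div (by continuity)
    intro t; positivity
  have hg0 : g 0 = 0 := by simp [hg]
  set h0 : A := ∑ i ∈ S, b i * star (b i) with hh0
  have hh0sa : IsSelfAdjoint h0 := by
    rw [IsSelfAdjoint, hh0, star_sum]
    simp [star_mul]
  set a : A := cfcₙ g h0 with ha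
  have hasa : IsSelfAdjoint a := cfcₙ_predicate g h0
  have hnorm_a : ‖a‖ ≤ 1 := by
    refine norm_cfcₙ_le fun t _ => ?_
    rw [Real.norm_eq_abs, hg, abs_div, abs_of_pos (by positivity : (0:ℝ) < |t| + c)]
    rw [div_le_one (by positivity)]
    linarith [abs_nonneg t]
  refine ⟨a, hnorm_a, fun i hi => ?_⟩
  -- work in the unitization
  have hinr : ((h0 : Unitization ℂ A)) = ∑ j ∈ S,
      ((b j : Unitization ℂ A) * star ((b j : Unitization ℂ A))) := by
    have h := map_sum (Unitization.inrNonUnitalStarAlgHom ℂ A) (fun j => b j * star (b j)) S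
    simpa only [Unitization.inrNonUnitalStarAlgHom_apply, Unitization.inr_mul,
      Unitization.inr_star] using h
  set hU : Unitization ℂ A := (h0 : Unitization ℂ A) with hhU
  have hU0 : 0 ≤ hU := by
    rw [hinr]
    exact Finset.sum_nonneg fun j _ => mul_star_self_nonneg _
  have hacfc : (a : Unitization ℂ A) = cfc g hU := Unitization.real_cfcₙ_eq_cfc_inr h0 g hg0
  set z : Unitization ℂ A := (b i : Unitization ℂ A) with hz
  set e : Unitization ℂ A := 1 - (a : Unitization ℂ A) with he
  have hesa : star e = e := by
    rw [he, star_sub, star_one]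
    congr 1
    rw [← Unitization.inr_star, hasa.star_eq]
  have hzz : z * star z ≤ hU := by
    rw [hinr]
    exact Finset.single_le_sum (fun j _ => mul_star_self_nonneg ((b j : Unitization ℂ A))) hi
  have hconj : e * (z * star z) * e ≤ e * hU * e := by
    have h := star_left_conjugate_le_conjugate hzz e
    rwa [hesa] at h
  have hreassoc : e * (z * star z) * e = (e * z) * star (e * z) := by
    rw [star_mul, hesa]; noncomm_ring
  have hnn : 0 ≤ e * (z * star z) * e := by
    rw [hreassoc]; exact mul_star_self_nonneg _
  have h1 : ‖e * (z * star z) * e‖ ≤ ‖e * hU * e‖ :=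
    CStarAlgebra.norm_le_norm_of_nonneg_of_le hnn hconj
  have hU_sa : IsSelfAdjoint hU := hU0.isSelfAdjoint
  have he' : e = cfc (fun t : ℝ => 1 - g t) hU := by
    rw [cfc_sub (fun _ : ℝ => (1:ℝ)) g hU continuousOn_const hgc.continuousOn,
      cfc_const_one ℝ hU, ← hacfc, he]
  have h2 : e * hU * e = cfc (fun t : ℝ => (1 - g t) * t * (1 - g t)) hU := by
    rw [cfc_mul (fun t : ℝ => (1 - g t) * t) (fun t : ℝ => 1 - g t) hU
        ((continuousOn_const.sub hgc.continuousOn).mul continuousOn_id)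
        (continuousOn_const.sub hgc.continuousOn),
      cfc_mul (fun t : ℝ => 1 - g t) (fun t : ℝ => t) hU
        (continuousOn_const.sub hgc.continuousOn) continuousOn_id,
      cfc_id' ℝ hU, ← he']
  have hspec : ∀ t ∈ spectrum ℝ hU, 0 ≤ t := fun t ht =>
    spectrum_nonneg_of_nonneg hU0 ht
  have h3 : ‖e * hU * e‖ ≤ c := by
    rw [h2]
    refine norm_cfc_le hc0.le fun t ht => ?_
    have ht0 := hspec t ht
    have habs : |t| = t := abs_of_nonneg ht0
    have h1g : 1 - g t = c / (t + c) := by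
      rw [hg]; simp only [habs]
      field_simp
      ring
    rw [Real.norm_eq_abs, h1g]
    have htc : 0 < t + c := by linarith
    rw [abs_of_nonneg (by positivity)]
    rw [div_mul_eq_mul_div, div_mul_div_comm, div_le_iff₀ (by positivity)]
    nlinarith [sq_nonneg (t - c), sq_nonneg (t + c)]
  have h4 : ‖e * z‖ ^ 2 ≤ c := by
    have := (h1.trans h3)
    rwa [hreassoc, CStarRing.norm_self_mul_star, ← sq] at this
  have h5 : ‖e * z‖ ≤ ε / 2 := by
    have := Real.sqrt_le_sqrt h4
    rwa [Real.sqrt_sq (norm_nonneg _), hc, Real.sqrt_sq (by positivity)] at this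
  have hez : e * z = ((b i - a * b i : A) : Unitization ℂ A) := by
    rw [he, sub_mul, one_mul, Unitization.inr_sub, Unitization.inr_mul, hz]
  have hfinal : ‖a * b i - b i‖ = ‖e * z‖ := by
    rw [hez, Unitization.norm_inr, norm_sub_rev]
  rw [hfinal]
  linarith [h5]

theorem statement1
    {ι : Type*} {A : Type*} [NonUnitalCStarAlgebra A]
    (J : ι → TwoSidedIdeal A)
    (hJclosed : ∀ i, IsClosed ((J i : Set A)))
    (hJinter : ∀ a : A, (∀ i, a ∈ J i) → a = 0)
    (hJc0 : ∀ a : A, Tendsto (fun i => infDist a (J i : Set A)) cofinite (𝓝 0)) :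
    ∀ b : ι → A, Tendsto (fun i => infDist (b i) (J i : Set A)) cofinite (𝓝 0) →
      ∀ ε : ℝ, 0 < ε →
        ∃ a : A, ∀ i, infDist (a * b i - b i) (J i : Set A) < ε := by
  intro b hb ε hε
  have hev : ∀ᶠ i in cofinite, infDist (b i) (J i : Set A) < ε / 3 :=
    hb.eventually (gt_mem_nhds (by positivity))
  have hfin : {i | ¬ infDist (b i) (J i : Set A) < ε / 3}.Finite :=
    Filter.eventually_cofinite.mp hev
  obtain ⟨a, ha1, ha2⟩ := exists_approx_unit_finset hfin.toFinset b hε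
  refine ⟨a, fun i => ?_⟩
  by_cases hiS : i ∈ hfin.toFinset
  · calc infDist (a * b i - b i) (J i : Set A)
        ≤ dist (a * b i - b i) 0 := infDist_le_dist_of_mem (J i).zero_mem
      _ = ‖a * b i - b i‖ := by rw [dist_zero_right]
      _ < ε := ha2 i hiS
  · have hlt : infDist (b i) (J i : Set A) < ε / 3 := by
      have := hfin.mem_toFinset.not.mp hiS
      simpa using this
    have hne : (J i : Set A).Nonempty := ⟨0, (J i).zero_mem⟩
    obtain ⟨j, hjmem, hj⟩ := (infDist_lt_iff hne).mp hlt
    rw [dist_eq_norm] at hj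
    calc infDist (a * b i - b i) (J i : Set A)
        ≤ dist (a * b i - b i) (a * j - j) :=
          infDist_le_dist_of_mem ((J i).sub_mem ((J i).mul_mem_left a j hjmem) hjmem)
      _ = ‖a * (b i - j) - (b i - j)‖ := by rw [dist_eq_norm]; congr 1; noncomm_ring
      _ ≤ ‖a * (b i - j)‖ + ‖b i - j‖ := norm_sub_le _ _
      _ ≤ ‖a‖ * ‖b i - j‖ + ‖b i - j‖ := by gcongr; exact norm_mul_le _ _
      _ ≤ 1 * ‖b i - j‖ + ‖b i - j‖ := by gcongr
      _ < ε := by rw [one_mul]; linarith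
end

section
/- Let A be a C*-algebra, n ≥ 1, and let J_1, …, J_n be closed two-sided ideals of A with J_1 ∩ ⋯ ∩ J_n = {0}. For each pair (i,j), the sum J_i + J_j is a closed two-sided ideal of A; let q_{ij} : A/J_i → A/(J_i + J_j) denote the canonical quotient *-homomorphism. Then for every n-tuple (b_1, …, b_n) with b_i ∈ A/J_i, the following are equivalent: (1) there exists a ∈ A with a + J_i = b_i for every i; (2) q_{ij}(b_i) = q_{ji}(b_j) in A/(J_i + J_j) for all pairs (i,j). Moreover, when such an element a exists it is unique. -/
/-!
STATEMENT 2.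

`A` a C*-algebra, `n ≥ 1`, and `J 1, …, J n` closed two-sided ideals with
trivial intersection.  For each pair `(i, j)` the sum `J i + J j` (the
two-sided ideal `J i ⊔ J j`, whose underlying set is exactly
`{u + v : u ∈ J i, v ∈ J j}`) is closed, and for every tuple of classes
`(b i + J i)_i` (encoded by a tuple `b : Fin n → A` of representatives) the
following are equivalent:
(1) there is `a : A` with `a + J i = b i + J i` (i.e. `a - b i ∈ J i`) for all `i`;
(2) the classes agree on overlaps: `b i - b j ∈ J i ⊔ J j` for all `i, j`.
Moreover such an `a` is unique when it exists.
-/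


lemma exists_approx' {A : Type*} [NonUnitalCStarAlgebra A]
    (I : TwoSidedIdeal A) (y : A) (hy : y ∈ I) {ε : ℝ} (hε : 0 < ε) :
    ∃ e : A, e ∈ I ∧ (∀ w : A, ‖w - e * w‖ ≤ ‖w‖) ∧ ‖y - e * y‖ ≤ ε := by
  set δ : ℝ := ε ^ 2 with hδdef
  have hδ : 0 < δ := by positivity
  set a : A := y * star y with ha_def
  set b : Unitization ℂ A := (a : Unitization ℂ A) with hb_def
  have hb : (0 : Unitization ℂ A) ≤ b := by
    rw [hb_def, ha_def, Unitization.inr_mul, Unitization.inr_star]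
    exact mul_star_self_nonneg _
  have hb_sa : IsSelfAdjoint b := .of_nonneg hb
  have hsp : ∀ t ∈ spectrum ℝ b, 0 ≤ t := fun t ht => spectrum_nonneg_of_nonneg hb ht
  have hcont_g : ContinuousOn (fun t : ℝ => (t + δ)⁻¹) (spectrum ℝ b) := by
    apply ContinuousOn.inv₀ (by fun_prop)
    intro t ht
    have := hsp t ht
    positivity
  set c : Unitization ℂ A := cfc (fun t : ℝ => (t + δ)⁻¹) b with hc_def
  have hcont_f : ContinuousOn (fun t : ℝ => t * (t + δ)⁻¹) (spectrum ℝ b) :=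
    ContinuousOn.mul (by fun_prop) hcont_g
  have hbc : b * c = cfc (fun t : ℝ => t * (t + δ)⁻¹) b := by
    rw [cfc_mul _ _ b (by fun_prop) hcont_g, cfc_id' ℝ b]
  set e : A := (b * c).snd with he_def
  have he : (e : Unitization ℂ A) = b * c := by
    apply Unitization.ext
    · simp [Unitization.fst_mul, hb_def]
    · simp [he_def]
  have heI : e ∈ I := by
    have : e = (c.fst : ℂ) • a + a * c.snd := by
      rw [he_def, Unitization.snd_mul]
      simp [hb_def]
    rw [this, ha_def]
    refine I.add_mem ?_ ?_
    · rw [← mul_smul_comm]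
      exact I.mul_mem_right _ _ hy
    · rw [mul_assoc]
      exact I.mul_mem_right _ _ hy
  have hone : (1 : Unitization ℂ A) - b * c = cfc (fun t : ℝ => 1 - t * (t + δ)⁻¹) b := by
    rw [cfc_sub (fun _ => (1:ℝ)) _ b (by fun_prop) hcont_f, cfc_const_one ℝ b, hbc]
  set d : Unitization ℂ A := cfc (fun t : ℝ => 1 - t * (t + δ)⁻¹) b with hd_def
  have hcont_h : ContinuousOn (fun t : ℝ => 1 - t * (t + δ)⁻¹) (spectrum ℝ b) :=
    continuousOn_const.sub hcont_f
  have hd_sa : IsSelfAdjoint d := cfc_predicate _ b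
  have hone_norm : ‖(1 : Unitization ℂ A) - b * c‖ ≤ 1 := by
    rw [hone]
    apply norm_cfc_le zero_le_one
    intro t ht
    have h0 := hsp t ht
    have hpos : (0:ℝ) < t + δ := by positivity
    have hv : 1 - t * (t + δ)⁻¹ = δ / (t + δ) := by field_simp; ring
    rw [hv, Real.norm_eq_abs, abs_of_nonneg (by positivity), div_le_one hpos]
    linarith
  have hcontr : ∀ w : A, ‖w - e * w‖ ≤ ‖w‖ := by
    intro w
    have hw : ((w - e * w : A) : Unitization ℂ A) = (1 - b * c) * (w : Unitization ℂ A) := by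
      rw [Unitization.inr_sub, Unitization.inr_mul, he, sub_mul, one_mul]
    calc ‖w - e * w‖ = ‖((w - e * w : A) : Unitization ℂ A)‖ := (Unitization.norm_inr _).symm
      _ ≤ ‖(1 : Unitization ℂ A) - b * c‖ * ‖(w : Unitization ℂ A)‖ := hw ▸ norm_mul_le _ _
      _ ≤ 1 * ‖w‖ := by
          rw [Unitization.norm_inr]
          exact mul_le_mul_of_nonneg_right hone_norm (norm_nonneg _)
      _ = ‖w‖ := one_mul _
  refine ⟨e, heI, hcontr, ?_⟩
  set x : Unitization ℂ A := ((y - e * y : A) : Unitization ℂ A) with hx_def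
  have hx : x = d * (y : Unitization ℂ A) := by
    rw [hx_def, Unitization.inr_sub, Unitization.inr_mul, he, ← hone, sub_mul, one_mul]
  have hxx : x * star x = d * b * d := by
    rw [hx, star_mul, hd_sa.star_eq, ← Unitization.inr_star, hb_def, ha_def, Unitization.inr_mul]
    simp [mul_assoc]
  have hdbd : d * b * d = cfc (fun t : ℝ => (1 - t * (t + δ)⁻¹) * t * (1 - t * (t + δ)⁻¹)) b := by
    rw [cfc_mul (fun t : ℝ => (1 - t * (t + δ)⁻¹) * t) (fun t : ℝ => 1 - t * (t + δ)⁻¹) b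
        (hcont_h.mul continuousOn_id) hcont_h,
      cfc_mul (fun t : ℝ => 1 - t * (t + δ)⁻¹) (fun t : ℝ => t) b hcont_h continuousOn_id,
      cfc_id' ℝ b]
  have hbound : ‖d * b * d‖ ≤ δ / 4 := by
    rw [hdbd]
    apply norm_cfc_le (by positivity)
    intro t ht
    have h0 := hsp t ht
    have hpos : (0:ℝ) < t + δ := by positivity
    have hv : 1 - t * (t + δ)⁻¹ = δ / (t + δ) := by field_simp; ring
    rw [hv, Real.norm_eq_abs, abs_of_nonneg (by positivity), div_mul_eq_mul_div,
      div_mul_div_comm, div_le_div_iff₀ (by positivity) (by norm_num)]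
    nlinarith [mul_nonneg hδ.le (sq_nonneg (t - δ))]
  have hnx : ‖y - e * y‖ * ‖y - e * y‖ ≤ δ / 4 := by
    calc ‖y - e * y‖ * ‖y - e * y‖ = ‖x‖ * ‖x‖ := by rw [hx_def, Unitization.norm_inr]
      _ = ‖x * star x‖ := CStarRing.norm_self_mul_star.symm
      _ ≤ δ / 4 := hxx ▸ hbound
  nlinarith [norm_nonneg (y - e * y), hε, hnx]

section aux

variable {A : Type*} [NonUnitalCStarAlgebra A]

lemma approx_inter' (I J : TwoSidedIdeal A) {z y : A} (hz : z ∈ J) (hy : y ∈ I)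
    {ε : ℝ} (hε : 0 < ε) :
    ∃ c : A, c ∈ I ∧ c ∈ J ∧ ‖z - c‖ ≤ ‖z - y‖ + ε := by
  obtain ⟨e, heI, hcontr, happ⟩ := exists_approx' I y hy hε
  refine ⟨e * z, I.mul_mem_right _ _ heI, J.mul_mem_left _ _ hz, ?_⟩
  have h1 : z - e * z = ((z - y) - e * (z - y)) + (y - e * y) := by
    rw [mul_sub]; abel
  calc ‖z - e * z‖ = ‖((z - y) - e * (z - y)) + (y - e * y)‖ := by rw [h1]
    _ ≤ ‖(z - y) - e * (z - y)‖ + ‖y - e * y‖ := norm_add_le _ _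
    _ ≤ ‖z - y‖ + ε := add_le_add (hcontr _) happ

lemma sup_closed' (I J : TwoSidedIdeal A) (hI : IsClosed (I : Set A))
    (hJ : IsClosed (J : Set A)) :
    IsClosed ((I ⊔ J : TwoSidedIdeal A) : Set A) := by
  apply isClosed_of_closure_subset
  intro x hx
  rw [Metric.mem_closure_iff] at hx
  have hsel : ∀ n : ℕ, ∃ u v : A, u ∈ I ∧ v ∈ J ∧ ‖x - (u + v)‖ < (2:ℝ)⁻¹ ^ (n+2) := by
    intro n
    obtain ⟨w, hw, hdist⟩ := hx ((2:ℝ)⁻¹ ^ (n+2)) (by positivity)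
    rw [SetLike.mem_coe, TwoSidedIdeal.mem_sup] at hw
    obtain ⟨u, hu, v, hv, rfl⟩ := hw
    exact ⟨u, v, hu, hv, by rwa [dist_eq_norm] at hdist⟩
  choose u v hu hv hw using hsel
  have hsel2 : ∀ n : ℕ, ∃ c : A, c ∈ I ∧ c ∈ J ∧ ‖(v (n+1) - v n) - c‖ ≤ (2:ℝ)⁻¹ ^ n := by
    intro n
    obtain ⟨c, hcI, hcJ, hc⟩ := approx_inter' I J (J.sub_mem (hv (n+1)) (hv n))
      (I.sub_mem (hu n) (hu (n+1))) (show (0:ℝ) < (2:ℝ)⁻¹ ^ (n+1) by positivity)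
    refine ⟨c, hcI, hcJ, hc.trans ?_⟩
    have heq : (v (n+1) - v n) - (u n - u (n+1))
        = (x - (u n + v n)) - (x - (u (n+1) + v (n+1))) := by abel
    have hb : ‖(v (n+1) - v n) - (u n - u (n+1))‖ ≤ (2:ℝ)⁻¹^(n+2) + (2:ℝ)⁻¹^(n+3) := by
      rw [heq]; exact (norm_sub_le _ _).trans (add_le_add (hw n).le (hw (n+1)).le)
    have hP : (0:ℝ) < (2:ℝ)⁻¹ ^ n := by positivity
    have e1 : (2:ℝ)⁻¹^(n+2) + (2:ℝ)⁻¹^(n+3) + (2:ℝ)⁻¹^(n+1) ≤ (2:ℝ)⁻¹^n := by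
      rw [pow_add, pow_add, pow_add]
      nlinarith [hP]
    linarith [hb]
  choose cs hcI hcJ hc using hsel2
  have hsumJ : ∀ n, (∑ k ∈ Finset.range n, cs k) ∈ J := by
    intro n
    induction n with
    | zero => simpa using J.zero_mem
    | succ n ih => rw [Finset.sum_range_succ]; exact J.add_mem ih (hcJ n)
  have hsumI : ∀ n, (∑ k ∈ Finset.range n, cs k) ∈ I := by
    intro n
    induction n with
    | zero => simpa using I.zero_mem
    | succ n ih => rw [Finset.sum_range_succ]; exact I.add_mem ih (hcI n)
  set s : ℕ → A := fun n => v n - ∑ k ∈ Finset.range n, cs k with hs_def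
  have hs_mem : ∀ n, s n ∈ (J : Set A) := fun n =>
    SetLike.mem_coe.mpr (J.sub_mem (hv n) (hsumJ n))
  have hcauchy : CauchySeq s := by
    apply cauchySeq_of_le_geometric (r := (2:ℝ)⁻¹) 1 (by norm_num)
    intro n
    rw [dist_eq_norm, one_mul]
    have heq : s n - s (n+1) = -((v (n+1) - v n) - cs n) := by
      simp only [hs_def, Finset.sum_range_succ]
      abel
    rw [heq, norm_neg]
    exact hc n
  obtain ⟨z, hz_tendsto⟩ := cauchySeq_tendsto_of_complete hcauchy
  have hzJ : z ∈ J := hJ.mem_of_tendsto hz_tendsto (Filter.Eventually.of_forall hs_mem)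
  set t : ℕ → A := fun n => u n + ∑ k ∈ Finset.range n, cs k with ht_def
  have ht_mem : ∀ n, t n ∈ (I : Set A) := fun n =>
    SetLike.mem_coe.mpr (I.add_mem (hu n) (hsumI n))
  have hlim : Filter.Tendsto t Filter.atTop (nhds (x - z)) := by
    have h1 : Filter.Tendsto (fun n => x - s n) Filter.atTop (nhds (x - z)) :=
      tendsto_const_nhds.sub hz_tendsto
    have h2 : Filter.Tendsto (fun n => x - (u n + v n)) Filter.atTop (nhds 0) := by
      apply squeeze_zero_norm (fun n => (hw n).le)
      have h3 : Filter.Tendsto (fun n : ℕ => (2:ℝ)⁻¹ ^ n) Filter.atTop (nhds 0) :=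
        tendsto_pow_atTop_nhds_zero_of_lt_one (by norm_num) (by norm_num)
      exact h3.comp (Filter.tendsto_add_atTop_nat 2)
    have heq : ∀ n, t n = (x - s n) - (x - (u n + v n)) := by
      intro n; simp only [ht_def, hs_def]; abel
    have := h1.sub h2
    rw [sub_zero] at this
    exact this.congr (fun n => (heq n).symm)
  have hxzI : x - z ∈ I := hI.mem_of_tendsto hlim (Filter.Eventually.of_forall ht_mem)
  exact SetLike.mem_coe.mpr (TwoSidedIdeal.mem_sup.mpr
    ⟨x - z, hxzI, z, hzJ, by abel⟩)

lemma step' (I J K : TwoSidedIdeal A)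
    (hclosed : IsClosed (((I ⊓ J) ⊔ K : TwoSidedIdeal A) : Set A))
    {u : A} (huI : u ∈ I) (huJK : u ∈ J ⊔ K) : u ∈ (I ⊓ J) ⊔ K := by
  obtain ⟨u₂, hu₂, k, hk, heq⟩ := TwoSidedIdeal.mem_sup.mp huJK
  have hmem : u ∈ closure (((I ⊓ J) ⊔ K : TwoSidedIdeal A) : Set A) := by
    rw [Metric.mem_closure_iff]
    intro ε hε
    obtain ⟨e, heJ, hcontr, happ⟩ := exists_approx' J u₂ hu₂ (half_pos hε)
    refine ⟨e * u + (k - e * k), ?_, ?_⟩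
    · apply SetLike.mem_coe.mpr
      apply TwoSidedIdeal.add_mem
      · exact TwoSidedIdeal.mem_sup_left ((TwoSidedIdeal.mem_inf (R := A)).mpr
          ⟨I.mul_mem_left _ _ huI, J.mul_mem_right _ _ heJ⟩)
      · exact TwoSidedIdeal.mem_sup_right (K.sub_mem hk (K.mul_mem_left _ _ hk))
    · rw [dist_eq_norm]
      have hrw : u - (e * u + (k - e * k)) = u₂ - e * u₂ := by
        rw [← heq, mul_add]
        abel
      rw [hrw]
      exact lt_of_le_of_lt happ (half_lt_self hε)
  exact SetLike.mem_coe.mp (hclosed.closure_subset hmem)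

lemma distr' {n : ℕ} (J : Fin n → TwoSidedIdeal A) (hJc : ∀ i, IsClosed ((J i : Set A)))
    (K : TwoSidedIdeal A) (hK : IsClosed (K : Set A)) :
    ∀ m : ℕ, m ≤ n → ∀ x : A, (∀ i : Fin n, i.val < m → x ∈ J i ⊔ K) →
      ∃ u v : A, (∀ i : Fin n, i.val < m → u ∈ J i) ∧ v ∈ K ∧ x = u + v := by
  intro m
  induction m with
  | zero =>
    exact fun _ x _ => ⟨x, 0, fun i h => absurd h (Nat.not_lt_zero _), K.zero_mem,
      (add_zero x).symm⟩
  | succ m ih =>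
    intro hm x hx
    obtain ⟨u, v, huJ, hvK, rfl⟩ :=
      ih (Nat.le_of_succ_le hm) x (fun i h => hx i (Nat.lt_succ_of_lt h))
    set p : Fin n := ⟨m, hm⟩ with hp_def
    set Im : TwoSidedIdeal A := ⨅ i : {i : Fin n // i.val < m}, J i.val with hIm
    have hmem_Im : ∀ w : A, w ∈ Im ↔ ∀ i : Fin n, i.val < m → w ∈ J i := by
      intro w
      rw [hIm, TwoSidedIdeal.mem_iInf]
      exact ⟨fun h i hi => h ⟨i, hi⟩, fun h i => h i.1 i.2⟩
    have hImc : IsClosed ((Im : Set A)) := by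
      have hset : (Im : Set A) = ⋂ i : {i : Fin n // i.val < m}, (J i.val : Set A) := by
        ext w
        simp only [SetLike.mem_coe, hmem_Im, Set.mem_iInter]
        exact ⟨fun h i => h i.1 i.2, fun h i hi => h ⟨i, hi⟩⟩
      rw [hset]
      exact isClosed_iInter fun i => hJc i.val
    have hmemIm : u ∈ Im := (hmem_Im u).mpr huJ
    have hIpc : IsClosed ((Im ⊓ J p : TwoSidedIdeal A) : Set A) := by
      have hset : ((Im ⊓ J p : TwoSidedIdeal A) : Set A) = (Im : Set A) ∩ (J p : Set A) := by
        ext w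
        simp [TwoSidedIdeal.mem_inf]
      rw [hset]
      exact hImc.inter (hJc p)
    have huJK : u ∈ J p ⊔ K := by
      have h1 : (u + v) ∈ J p ⊔ K := hx p (Nat.lt_succ_self m)
      have h2 := TwoSidedIdeal.sub_mem _ h1 (TwoSidedIdeal.mem_sup_right hvK)
      simpa using h2
    have hres := step' Im (J p) K (sup_closed' _ K hIpc hK) hmemIm huJK
    obtain ⟨u', hu', k', hk', heq⟩ := TwoSidedIdeal.mem_sup.mp hres
    refine ⟨u', k' + v, ?_, K.add_mem hk' hvK, ?_⟩
    · intro i hi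
      rcases Nat.lt_succ_iff_lt_or_eq.mp hi with h | h
      · exact (hmem_Im u').mp ((TwoSidedIdeal.mem_inf (R := A)).mp hu').1 i h
      · have hip : i = p := Fin.ext h
        rw [hip]
        exact ((TwoSidedIdeal.mem_inf (R := A)).mp hu').2
    · rw [← heq, add_assoc]

lemma glue' {n : ℕ} (J : Fin n → TwoSidedIdeal A) (hJc : ∀ i, IsClosed ((J i : Set A)))
    (b : Fin n → A) (hcomp : ∀ i j, b i - b j ∈ J i ⊔ J j) :
    ∀ m : ℕ, m ≤ n → ∃ a : A, ∀ i : Fin n, i.val < m → a - b i ∈ J i := by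
  intro m
  induction m with
  | zero => exact fun _ => ⟨0, fun i h => absurd h (Nat.not_lt_zero _)⟩
  | succ m ih =>
    intro hm
    obtain ⟨a, ha⟩ := ih (Nat.le_of_succ_le hm)
    set p : Fin n := ⟨m, hm⟩ with hp_def
    have hap : ∀ i : Fin n, i.val < m → a - b p ∈ J i ⊔ J p := by
      intro i hi
      have heq : a - b p = (a - b i) + (b i - b p) := by abel
      rw [heq]
      exact TwoSidedIdeal.add_mem _ (TwoSidedIdeal.mem_sup_left (ha i hi)) (hcomp i p)
    obtain ⟨u, v, huJ, hvK, heq⟩ :=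
      distr' J hJc (J p) (hJc p) m (Nat.le_of_succ_le hm) (a - b p) hap
    refine ⟨a - u, ?_⟩
    intro i hi
    rcases Nat.lt_succ_iff_lt_or_eq.mp hi with h | h
    · have hrw : a - u - b i = (a - b i) - u := by abel
      rw [hrw]
      exact (J i).sub_mem (ha i h) (huJ i h)
    · have hip : i = p := Fin.ext h
      rw [hip]
      have hrw : a - u - b p = v := by
        rw [sub_right_comm, heq, add_sub_cancel_left]
      rw [hrw]
      exact hvK

end aux
theorem statement2
    {A : Type*} [NonUnitalCStarAlgebra A]
    (n : ℕ) (hn : 1 ≤ n)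
    (J : Fin n → TwoSidedIdeal A)
    (hJclosed : ∀ i, IsClosed ((J i : Set A)))
    (hJinter : ∀ a : A, (∀ i, a ∈ J i) → a = 0) :
    -- each `J i + J j` is a closed two-sided ideal:
    (∀ i j, IsClosed (((J i ⊔ J j : TwoSidedIdeal A) : Set A))) ∧
    -- gluing of elements, and uniqueness:
    (∀ b : Fin n → A,
      ((∃ a : A, ∀ i, a - b i ∈ J i) ↔ (∀ i j, b i - b j ∈ J i ⊔ J j)) ∧
      (∀ a a' : A, (∀ i, a - b i ∈ J i) → (∀ i, a' - b i ∈ J i) → a = a')) := by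
  refine ⟨fun i j => sup_closed' (J i) (J j) (hJclosed i) (hJclosed j),
    fun b => ⟨⟨?_, ?_⟩, ?_⟩⟩
  · rintro ⟨a, ha⟩ i j
    have hrw : b i - b j = (a - b j) - (a - b i) := by abel
    rw [hrw]
    exact TwoSidedIdeal.sub_mem _ (TwoSidedIdeal.mem_sup_right (ha j))
      (TwoSidedIdeal.mem_sup_left (ha i))
  · intro hcomp
    obtain ⟨a, ha⟩ := glue' J hJclosed b hcomp n le_rfl
    exact ⟨a, fun i => ha i i.isLt⟩
  · intro a a' haa ha'
    have hmem : ∀ i, a - a' ∈ J i := fun i => by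
      have hrw : a - a' = (a - b i) - (a' - b i) := by abel
      rw [hrw]
      exact (J i).sub_mem (haa i) (ha' i)
    exact sub_eq_zero.mp (hJinter _ hmem)
end

section
/- Let A be a C*-algebra, let X be a right Hilbert C*-module over A, let n ≥ 1, and let J_1, …, J_n be closed two-sided ideals of A with J_1 ∩ ⋯ ∩ J_n = {0}. For a closed two-sided ideal K of A let X·K denote the closed linear span of {x·k : x ∈ X, k ∈ K}; since X·J_i ⊆ X·(J_i + J_j), there are canonical quotient maps X/(X·J_i) → X/(X·(J_i + J_j)). Then for every n-tuple (x_1, …, x_n) with x_i ∈ X/(X·J_i), the following are equivalent: (1) there exists x ∈ X whose class in X/(X·J_i) equals x_i for every i; (2) for all pairs (i,j), the images of x_i and x_j under the canonical quotient maps into X/(X·(J_i + J_j)) coincide. Moreover, when such x exists it is unique. -/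
/-!
STATEMENT 4.

`A` a C*-algebra, `X` a right Hilbert C*-module over `A`, `n ≥ 1`, and
`J 1, …, J n` closed two-sided ideals of `A` with trivial intersection.  For a
closed two-sided ideal `K`, `X·K := closure (span ℂ {x <• k : k ∈ K, x ∈ X})`.
For a tuple of classes in the quotients `X/(X·J i)`, encoded by a tuple
`b : Fin n → X` of representatives (two elements represent the same class in
`X/(X·J i)` iff their difference lies in `X·J i`), the following are
equivalent:
(1) there is `x : X` with `x - b i ∈ X·J i` for all `i`;
(2) the classes agree on overlaps: `b i - b j ∈ X·(J i + J j)` for all `i, j`,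
where `J i + J j` is the two-sided ideal `J i ⊔ J j`.
Moreover such an `x` is unique when it exists.
-/

open Metric Filter Topology
open scoped RightActions

/-- The December 2024 Mathlib `CStarModule` (right Hilbert C⋆-module, right action by `Aᵐᵒᵖ`),
restated here because Mathlib's `CStarModule` is now a left module. -/
class RightCStarModule (A : Type*) (E : Type*) [NonUnitalSemiring A] [StarRing A]
    [Module ℂ A] [AddCommGroup E] [Module ℂ E] [PartialOrder A] [SMul Aᵐᵒᵖ E] [Norm A] [Norm E]
    extends Inner A E where
  inner_add_right {x} {y} {z} : inner x (y + z) = inner x y + inner x z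
  inner_self_nonneg {x} : 0 ≤ inner x x
  inner_self {x} : inner x x = 0 ↔ x = 0
  inner_op_smul_right {a : A} {x y : E} : inner x (y <• a) = inner x y * a
  inner_smul_right_complex {z : ℂ} {x} {y} : inner x (z • y) = z • inner x y
  star_inner x y : star (inner x y) = inner y x
  norm_eq_sqrt_norm_inner_self x : ‖x‖ = √‖inner x x‖

/-- `X·S`: the closed `ℂ`-linear span of `{x <• k : k ∈ S, x ∈ X}`. -/
noncomputable def smulIdealSpan {A : Type*} [NonUnitalCStarAlgebra A]
    (X : Type*) [NormedAddCommGroup X] [Module ℂ X] [SMul Aᵐᵒᵖ X]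
    (S : Set A) : Set X :=
  closure (Submodule.span ℂ {z : X | ∃ k ∈ S, ∃ x : X, z = x <• k} : Set X)

open scoped Pointwise

namespace Stmt4

noncomputable section

variable {A : Type*} [NonUnitalCStarAlgebra A] [PartialOrder A] [StarOrderedRing A]

local notation "σₙ" => quasispectrum

/-- The approximate-unit function `t ↦ t / (|t| + δ)`. -/
def af (δ t : ℝ) : ℝ := t * (|t| + δ)⁻¹

lemma af_cont {δ : ℝ} (hδ : 0 < δ) : Continuous (af δ) :=
  continuous_id.mul <| (continuous_abs.fun_add continuous_const).inv₀ fun x => by positivity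

lemma af_zero (δ : ℝ) : af δ 0 = 0 := by simp [af]

lemma af_abs_le {δ : ℝ} (hδ : 0 < δ) (t : ℝ) : |af δ t| ≤ 1 := by
  have h1 : (0:ℝ) < |t| + δ := by positivity
  rw [af, ← div_eq_mul_inv, abs_div, abs_of_pos h1]
  exact div_le_one_of_le₀ (by linarith) h1.le

lemma af_nonneg {δ : ℝ} (hδ : 0 < δ) {t : ℝ} (ht : 0 ≤ t) : 0 ≤ af δ t := by
  have h1 : (0:ℝ) < |t| + δ := by positivity
  exact mul_nonneg ht (inv_nonneg.mpr h1.le)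

lemma key_bound {δ : ℝ} (hδ : 0 < δ) {h : A} (hh : 0 ≤ h) :
    ‖h - h * cfcₙ (af δ) h - cfcₙ (af δ) h * h + cfcₙ (af δ) h * h * cfcₙ (af δ) h‖ ≤ δ / 4 := by
  have hsa : IsSelfAdjoint h := hh.isSelfAdjoint
  have hc : ContinuousOn (af δ) (σₙ ℝ h) := (af_cont hδ).continuousOn
  have hid : cfcₙ (fun t : ℝ => t) h = h := cfcₙ_id' ℝ h
  have e1 : cfcₙ (fun t : ℝ => t * af δ t) h = h * cfcₙ (af δ) h := by
    rw [cfcₙ_mul _ _ h (by fun_prop) rfl hc (af_zero δ), hid]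
  have e2 : cfcₙ (fun t : ℝ => af δ t * t) h = cfcₙ (af δ) h * h := by
    rw [cfcₙ_mul _ _ h hc (af_zero δ) (by fun_prop) rfl, hid]
  have e3 : cfcₙ (fun t : ℝ => (af δ t * t) * af δ t) h = cfcₙ (af δ) h * h * cfcₙ (af δ) h := by
    rw [cfcₙ_mul _ _ h (hc.fun_mul (by fun_prop)) (by simp [af_zero]) hc (af_zero δ), e2]
  have main : cfcₙ (fun t : ℝ => (t - t * af δ t - af δ t * t) + (af δ t * t) * af δ t) h
      = h - h * cfcₙ (af δ) h - cfcₙ (af δ) h * h + cfcₙ (af δ) h * h * cfcₙ (af δ) h := by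
    rw [cfcₙ_add _ _ h (by fun_prop) (by simp [af_zero]) (hc.fun_mul (by fun_prop) |>.fun_mul hc)
        (by simp [af_zero]),
      cfcₙ_sub _ _ h ((by fun_prop : ContinuousOn (fun t : ℝ => t) (σₙ ℝ h)).fun_sub
        ((by fun_prop : ContinuousOn (fun t : ℝ => t) (σₙ ℝ h)).fun_mul hc))
        (by simp [af_zero]) (hc.fun_mul (by fun_prop)) (by simp [af_zero]),
      cfcₙ_sub _ _ h (by fun_prop) rfl ((by fun_prop : ContinuousOn (fun t : ℝ => t)
        (σₙ ℝ h)).fun_mul hc) (by simp [af_zero]), hid, e1, e2, e3]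
  rw [← main]
  refine norm_cfcₙ_le fun t ht => ?_
  have ht0 : 0 ≤ t := quasispectrum_nonneg_of_nonneg h hh t ht
  have habs : |t| = t := abs_of_nonneg ht0
  have hs : (0:ℝ) < t + δ := by linarith
  have haf : af δ t = t / (t + δ) := by rw [af, habs, div_eq_mul_inv]
  rw [haf, Real.norm_eq_abs]
  have hval : (t - t * (t / (t + δ)) - t / (t + δ) * t) + (t / (t + δ) * t) * (t / (t + δ))
      = t * δ ^ 2 / (t + δ) ^ 2 := by
    field_simp
    ring
  rw [hval, abs_of_nonneg (by positivity)]
  rw [div_le_iff₀ (by positivity)]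
  nlinarith [sq_nonneg (t - δ), sq_nonneg t, sq_nonneg δ, mul_nonneg ht0 hδ.le]

lemma key_norm {δ : ℝ} (hδ : 0 < δ) (a : A) :
    ‖a - a * cfcₙ (af δ) (star a * a)‖ ≤ Real.sqrt δ / 2 := by
  set h : A := star a * a with hh_def
  have hh : 0 ≤ h := star_mul_self_nonneg a
  set c : A := cfcₙ (af δ) h with hc_def
  have hcsa : IsSelfAdjoint c := IsSelfAdjoint.cfcₙ
  have expand : star (a - a * c) * (a - a * c) = h - h * c - c * h + c * h * c := by
    rw [star_sub, star_mul, hcsa.star_eq, hh_def]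
    noncomm_ring
  have h2 : ‖a - a * c‖ ^ 2 ≤ δ / 4 := by
    rw [pow_two, ← CStarRing.norm_star_mul_self, expand]
    exact key_bound hδ hh
  have h3 : ‖a - a * c‖ ^ 2 ≤ (Real.sqrt δ / 2) ^ 2 := by
    rwa [div_pow, Real.sq_sqrt hδ.le, show (2:ℝ)^2 = 4 by norm_num]
  exact (pow_le_pow_iff_left₀ (norm_nonneg _) (by positivity) two_ne_zero).mp h3

lemma key_tendsto (a : A) :
    Tendsto (fun n : ℕ => a * cfcₙ (af (1 / (n + 1))) (star a * a)) atTop (𝓝 a) := by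
  rw [tendsto_iff_norm_sub_tendsto_zero]
  have hbound : ∀ n : ℕ, ‖a * cfcₙ (af (1 / (n + 1))) (star a * a) - a‖
      ≤ Real.sqrt (1 / (n + 1)) / 2 := by
    intro n
    rw [norm_sub_rev]
    exact key_norm (by positivity) a
  refine squeeze_zero (fun n => norm_nonneg _) hbound ?_
  have h1 : Tendsto (fun n : ℕ => 1 / ((n : ℝ) + 1)) atTop (𝓝 0) :=
    tendsto_one_div_add_atTop_nhds_zero_nat
  have h2 : Tendsto (fun n : ℕ => Real.sqrt (1 / (n + 1))) atTop (𝓝 0) := by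
    have := (Real.continuous_sqrt.tendsto 0).comp h1
    simpa only [Function.comp_def, Real.sqrt_zero] using this
  simpa only [zero_div] using h2.div_const 2

lemma smul_mem_closed (I : TwoSidedIdeal A) (hI : IsClosed (I : Set A)) (r : ℂ) {a : A}
    (ha : a ∈ I) : r • a ∈ I := by
  have h1 : Tendsto (fun n : ℕ => a * (r • cfcₙ (af (1 / (n + 1))) (star a * a))) atTop
      (𝓝 (r • a)) := by
    have := (key_tendsto a).const_smul r
    simpa [mul_smul_comm] using this
  exact hI.mem_of_tendsto h1 (Eventually.of_forall fun n => I.mul_mem_right _ _ ha)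

lemma real_smul_mem_closed (I : TwoSidedIdeal A) (hI : IsClosed (I : Set A)) (r : ℝ) {a : A}
    (ha : a ∈ I) : r • a ∈ I := by
  have : (r : ℂ) • a = r • a := by
    rw [show (r : ℂ) = r • (1 : ℂ) by simp [Complex.real_smul], smul_assoc, one_smul]
  rw [← this]
  exact smul_mem_closed I hI _ ha


/-- every point of the real quasispectrum is bounded by the norm -/
lemma quasi_subset (h : A) : σₙ ℝ h ⊆ Set.Icc (-‖h‖) ‖h‖ := by
  intro t ht
  rw [Unitization.quasispectrum_eq_spectrum_inr' ℝ ℂ] at ht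
  have hb := spectrum.norm_le_norm_of_mem ht
  rw [Unitization.norm_inr, Real.norm_eq_abs] at hb
  exact abs_le.mp hb

open Polynomial in
lemma exists_poly {f : ℝ → ℝ} (hf : Continuous f) (hf0 : f 0 = 0) {M ε : ℝ} (hM : 0 ≤ M)
    (hε : 0 < ε) :
    ∃ p : ℝ[X], p.eval 0 = 0 ∧ ∀ t ∈ Set.Icc (-M) M, |f t - p.eval t| ≤ ε := by
  obtain ⟨p, hp⟩ := exists_polynomial_near_of_continuousOn (-M) M f hf.continuousOn (ε / 2)
    (by positivity)
  refine ⟨p - Polynomial.C (p.eval 0), by simp, fun t ht => ?_⟩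
  have h0 : (0:ℝ) ∈ Set.Icc (-M) M := by constructor <;> [linarith; linarith]
  have h0' := hp 0 h0
  rw [hf0, sub_zero] at h0'
  have ht' := hp t ht
  have : f t - (p - Polynomial.C (p.eval 0)).eval t = -(p.eval t - f t) + p.eval 0 := by
    simp; ring
  rw [this]
  calc |(-(p.eval t - f t)) + p.eval 0| ≤ |(-(p.eval t - f t))| + |p.eval 0| := abs_add_le _ _
    _ ≤ ε / 2 + ε / 2 := by rw [abs_neg]; exact add_le_add ht'.le h0'.le
    _ = ε := by ring

open Polynomial in
lemma poly_mem (I : TwoSidedIdeal A) (hI : IsClosed (I : Set A)) {h : A} (hsa : IsSelfAdjoint h)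
    (hmem : h ∈ I) (p : ℝ[X]) (hp : p.eval 0 = 0) : cfcₙ (fun t => p.eval t) h ∈ I := by
  obtain ⟨r, rfl⟩ : ∃ r, p = Polynomial.X * r :=
    Polynomial.X_dvd_iff.mpr (by rwa [Polynomial.coeff_zero_eq_eval_zero])
  have hfun : (fun t : ℝ => (Polynomial.X * r).eval t)
      = fun t : ℝ => t * (r.eval t - r.eval 0) + r.eval 0 * t := by
    funext t; simp [Polynomial.eval_mul]; ring
  rw [hfun, cfcₙ_add _ _ h ((continuous_id'.fun_mul (r.continuous.fun_sub continuous_const)).continuousOn)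
      (by simp) ((continuous_const.fun_mul continuous_id').continuousOn) (by simp)]
  refine I.add_mem ?_ ?_
  · rw [cfcₙ_mul _ _ h continuous_id'.continuousOn rfl
      ((r.continuous.fun_sub continuous_const).continuousOn) (by simp)]
    exact I.mul_mem_right _ _ (by rwa [cfcₙ_id' ℝ h])
  · have : cfcₙ (fun t : ℝ => r.eval 0 * t) h = r.eval 0 • h := by
      rw [show (fun t : ℝ => r.eval 0 * t) = fun t : ℝ => r.eval 0 • t from rfl,
        cfcₙ_smul (r.eval 0) (fun t : ℝ => t) h continuous_id'.continuousOn rfl, cfcₙ_id' ℝ h]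
    rw [this]
    exact real_smul_mem_closed I hI _ hmem

lemma cfcn_mem (I : TwoSidedIdeal A) (hI : IsClosed (I : Set A)) {h : A}
    (hsa : IsSelfAdjoint h) (hmem : h ∈ I) {f : ℝ → ℝ} (hf : Continuous f) (hf0 : f 0 = 0) :
    cfcₙ f h ∈ I := by
  have : cfcₙ f h ∈ closure (I : Set A) := by
    rw [Metric.mem_closure_iff]
    intro ε hε
    obtain ⟨p, hp0, hp⟩ := exists_poly hf hf0 (norm_nonneg h) (show 0 < ε/2 by positivity)
    refine ⟨cfcₙ (fun t => p.eval t) h, poly_mem I hI hsa hmem p hp0, ?_⟩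
    rw [dist_eq_norm, ← cfcₙ_sub _ _ h hf.continuousOn hf0
      (p.continuous.continuousOn) hp0]
    calc ‖cfcₙ (fun t => f t - p.eval t) h‖ ≤ ε / 2 :=
        norm_cfcₙ_le fun t ht => by
          rw [Real.norm_eq_abs]; exact hp t (quasi_subset h ht)
      _ < ε := by linarith
  rwa [hI.closure_eq] at this

lemma star_mem_closed (I : TwoSidedIdeal A) (hI : IsClosed (I : Set A)) {a : A}
    (ha : a ∈ I) : star a ∈ I := by
  have h1 := key_tendsto (star a)
  rw [star_star] at h1
  refine hI.mem_of_tendsto h1 (Eventually.of_forall fun n => ?_)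
  exact I.mul_mem_left _ _ <| cfcn_mem I hI (mul_star_self_nonneg a).isSelfAdjoint
    (I.mul_mem_right _ _ ha) (af_cont (by positivity)) (af_zero _)

/-- the closure of a two-sided ideal -/
def closureIdeal (I : TwoSidedIdeal A) : TwoSidedIdeal A :=
  .mk' (closure (I : Set A))
    (subset_closure I.zero_mem)
    (fun hx hy => map_mem_closure₂ continuous_add hx hy fun a ha b hb => I.add_mem ha hb)
    (fun hx => map_mem_closure continuous_neg hx fun b hb => I.neg_mem hb)
    (fun {x y} hy => map_mem_closure (f := fun b => x * b) (continuous_mul_left x) hy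
      fun b hb => I.mul_mem_left x b hb)
    (fun {x y} hx => map_mem_closure (f := fun b => b * y) (continuous_mul_right y) hx
      fun b hb => I.mul_mem_right b y hb)

lemma mem_closureIdeal {I : TwoSidedIdeal A} {a : A} :
    a ∈ closureIdeal I ↔ a ∈ closure (I : Set A) :=
  TwoSidedIdeal.mem_mk' _ _ _ _ _ _ _

lemma coe_closureIdeal (I : TwoSidedIdeal A) : (closureIdeal I : Set A) = closure (I : Set A) :=
  TwoSidedIdeal.coe_mk' _ _ _ _ _ _

lemma isClosed_closureIdeal (I : TwoSidedIdeal A) : IsClosed ((closureIdeal I : Set A)) := by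
  rw [coe_closureIdeal]; exact isClosed_closure

/-- the (algebraic) sum of two two-sided ideals, as a two-sided ideal -/
def sumIdeal (P Q : TwoSidedIdeal A) : TwoSidedIdeal A :=
  .mk' ((P : Set A) + (Q : Set A))
    (by rw [Set.mem_add]; exact ⟨0, P.zero_mem, 0, Q.zero_mem, add_zero 0⟩)
    (fun {x y} hx hy => by
      rw [Set.mem_add] at hx hy ⊢
      obtain ⟨p, hp, q, hq, rfl⟩ := hx
      obtain ⟨p', hp', q', hq', rfl⟩ := hy
      exact ⟨p + p', P.add_mem hp hp', q + q', Q.add_mem hq hq', by abel⟩)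
    (fun {x} hx => by
      rw [Set.mem_add] at hx ⊢
      obtain ⟨p, hp, q, hq, rfl⟩ := hx
      exact ⟨-p, P.neg_mem hp, -q, Q.neg_mem hq, (neg_add p q).symm⟩)
    (fun {x y} hy => by
      rw [Set.mem_add] at hy ⊢
      obtain ⟨p, hp, q, hq, rfl⟩ := hy
      exact ⟨x * p, P.mul_mem_left _ _ hp, x * q, Q.mul_mem_left _ _ hq, (mul_add x p q).symm⟩)
    (fun {x y} hx => by
      rw [Set.mem_add] at hx ⊢
      obtain ⟨p, hp, q, hq, rfl⟩ := hx
      exact ⟨p * y, P.mul_mem_right _ _ hp, q * y, Q.mul_mem_right _ _ hq, (add_mul p q y).symm⟩)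

lemma coe_sumIdeal (P Q : TwoSidedIdeal A) :
    (sumIdeal P Q : Set A) = (P : Set A) + (Q : Set A) :=
  TwoSidedIdeal.coe_mk' _ _ _ _ _ _

lemma coe_sup_eq (P Q : TwoSidedIdeal A) :
    ((P ⊔ Q : TwoSidedIdeal A) : Set A) = (P : Set A) + (Q : Set A) := by
  ext a
  rw [SetLike.mem_coe, TwoSidedIdeal.mem_sup, Set.mem_add]
  constructor
  · rintro ⟨y, hy, z, hz, rfl⟩
    exact ⟨y, hy, z, hz, rfl⟩
  · rintro ⟨y, hy, z, hz, rfl⟩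
    exact ⟨y, hy, z, hz, rfl⟩

lemma norm_sub_mul_le (x e : A) (he0 : 0 ≤ e) (he1 : ‖e‖ ≤ 1) : ‖x - x * e‖ ≤ ‖x‖ := by
  have key : ((x - x * e : A) : Unitization ℂ A)
      = (x : Unitization ℂ A) * (1 - (e : Unitization ℂ A)) := by
    rw [mul_sub, mul_one, Unitization.inr_sub, Unitization.inr_mul]
  have h2 : (0 : Unitization ℂ A) ≤ (e : Unitization ℂ A) := Unitization.inr_nonneg_iff.mpr he0
  have h3 : (e : Unitization ℂ A) ≤ 1 :=
    (CStarAlgebra.norm_le_one_iff_of_nonneg _ h2).mp (by rwa [Unitization.norm_inr])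
  have h4 : ‖(1 : Unitization ℂ A) - e‖ ≤ 1 :=
    (CStarAlgebra.norm_le_one_iff_of_nonneg _ (sub_nonneg.mpr h3)).mpr
      (sub_le_self _ h2)
  calc ‖x - x * e‖ = ‖((x - x * e : A) : Unitization ℂ A)‖ := (Unitization.norm_inr _).symm
    _ = ‖(x : Unitization ℂ A) * (1 - (e : Unitization ℂ A))‖ := by rw [key]
    _ ≤ ‖(x : Unitization ℂ A)‖ * ‖(1 : Unitization ℂ A) - (e : Unitization ℂ A)‖ :=
        norm_mul_le _ _
    _ ≤ ‖(x : Unitization ℂ A)‖ * 1 := by gcongr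
    _ = ‖x‖ := by rw [mul_one, Unitization.norm_inr]

lemma split_approx (P Q : TwoSidedIdeal A) (hP : IsClosed (P : Set A)) {c : A}
    (hc : c ∈ closure ((P : Set A) + (Q : Set A))) {ε : ℝ} (hε : 0 < ε) :
    ∃ p ∈ P, ∃ q ∈ Q, ‖c - p - q‖ < ε ∧ ‖p‖ ≤ ‖c‖ ∧ ‖q‖ ≤ ‖c‖ + ε := by
  obtain ⟨d, hd, hcd⟩ := Metric.mem_closure_iff.mp hc (ε / 4) (by positivity)
  rw [Set.mem_add] at hd
  obtain ⟨p₀, hp₀, q₀, hq₀, rfl⟩ := hd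
  set δ : ℝ := (ε / 2) ^ 2 with hδ_def
  have hδ : 0 < δ := by positivity
  set e : A := cfcₙ (af δ) (star p₀ * p₀) with he_def
  have hp₀sq : (0:A) ≤ star p₀ * p₀ := star_mul_self_nonneg p₀
  have he_mem : e ∈ P := cfcn_mem P hP hp₀sq.isSelfAdjoint (P.mul_mem_left _ _ hp₀)
    (af_cont hδ) (af_zero δ)
  have he0 : (0:A) ≤ e := cfcₙ_nonneg fun t ht =>
    af_nonneg hδ (quasispectrum_nonneg_of_nonneg _ hp₀sq t ht)
  have he1 : ‖e‖ ≤ 1 := norm_cfcₙ_le fun t ht => by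
    rw [Real.norm_eq_abs]; exact af_abs_le hδ t
  have hp₀e : ‖p₀ - p₀ * e‖ ≤ ε / 4 := by
    have h := key_norm hδ p₀
    rwa [hδ_def, Real.sqrt_sq (by positivity : (0:ℝ) ≤ ε / 2),
      show ε / 2 / 2 = ε / 4 by ring] at h
  refine ⟨c * e, P.mul_mem_left _ _ he_mem, q₀ - q₀ * e,
    Q.sub_mem hq₀ (Q.mul_mem_right _ _ hq₀), ?_, ?_, ?_⟩
  · have hid : c - c * e - (q₀ - q₀ * e)
        = ((c - (p₀ + q₀)) - (c - (p₀ + q₀)) * e) + (p₀ - p₀ * e) := by noncomm_ring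
    have hcd' : ‖c - (p₀ + q₀)‖ < ε / 4 := by rwa [← dist_eq_norm]
    calc ‖c - c * e - (q₀ - q₀ * e)‖
        ≤ ‖(c - (p₀ + q₀)) - (c - (p₀ + q₀)) * e‖ + ‖p₀ - p₀ * e‖ := by
          rw [hid]; exact norm_add_le _ _
      _ ≤ ‖c - (p₀ + q₀)‖ + ε / 4 := add_le_add (norm_sub_mul_le _ _ he0 he1) hp₀e
      _ < ε / 4 + ε / 4 := by linarith
      _ ≤ ε := by linarith
  · calc ‖c * e‖ ≤ ‖c‖ * ‖e‖ := norm_mul_le _ _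
      _ ≤ ‖c‖ * 1 := by gcongr
      _ = ‖c‖ := mul_one _
  · have h1 : ‖c - c * e‖ ≤ ‖c‖ := norm_sub_mul_le _ _ he0 he1
    have hid : c - c * e - (q₀ - q₀ * e)
        = ((c - (p₀ + q₀)) - (c - (p₀ + q₀)) * e) + (p₀ - p₀ * e) := by noncomm_ring
    have hcd' : ‖c - (p₀ + q₀)‖ < ε / 4 := by rwa [← dist_eq_norm]
    have h2 : ‖c - c * e - (q₀ - q₀ * e)‖ ≤ ε / 2 := by
      calc ‖c - c * e - (q₀ - q₀ * e)‖
          ≤ ‖(c - (p₀ + q₀)) - (c - (p₀ + q₀)) * e‖ + ‖p₀ - p₀ * e‖ := by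
            rw [hid]; exact norm_add_le _ _
        _ ≤ ‖c - (p₀ + q₀)‖ + ε / 4 := add_le_add (norm_sub_mul_le _ _ he0 he1) hp₀e
        _ ≤ ε / 2 := by linarith
    calc ‖q₀ - q₀ * e‖ = ‖(c - c * e) - (c - c * e - (q₀ - q₀ * e))‖ := by congr 1; abel
      _ ≤ ‖c - c * e‖ + ‖c - c * e - (q₀ - q₀ * e)‖ := norm_sub_le _ _
      _ ≤ ‖c‖ + ε / 2 := add_le_add h1 h2
      _ ≤ ‖c‖ + ε := by linarith

lemma mem_closure_mul (S T : TwoSidedIdeal A) {a : A} (haS : a ∈ closure (S : Set A))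
    (haT : a ∈ closure (T : Set A)) :
    a ∈ closure {x : A | ∃ s ∈ S, ∃ t ∈ T, x = s * t} := by
  have hT : star a * a ∈ closureIdeal T :=
    (closureIdeal T).mul_mem_left _ _ (mem_closureIdeal.mpr haT)
  have key := key_tendsto a
  refine isClosed_closure.mem_of_tendsto key (Eventually.of_forall fun n => ?_)
  have hc : cfcₙ (af (1 / (n + 1))) (star a * a) ∈ closure (T : Set A) := by
    rw [← coe_closureIdeal]
    exact SetLike.mem_coe.mpr <| cfcn_mem (closureIdeal T) (isClosed_closureIdeal T)
      (star_mul_self_nonneg a).isSelfAdjoint hT (af_cont (by positivity)) (af_zero _)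
  exact map_mem_closure₂ continuous_mul haS hc fun s hs t ht => ⟨s, hs, t, ht, rfl⟩

lemma pair_lemma (P₁ P₂ Q : TwoSidedIdeal A) {a : A}
    (h₁ : a ∈ closure ((P₁ : Set A) + (Q : Set A)))
    (h₂ : a ∈ closure ((P₂ : Set A) + (Q : Set A))) :
    a ∈ closure (((P₁ : Set A) ∩ (P₂ : Set A)) + (Q : Set A)) := by
  rw [← coe_sumIdeal] at h₁ h₂
  have h := mem_closure_mul (sumIdeal P₁ Q) (sumIdeal P₂ Q) h₁ h₂
  refine closure_mono ?_ h
  rintro x ⟨s, hs, t, ht, rfl⟩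
  have hs' : s ∈ (P₁ : Set A) + (Q : Set A) := by
    rw [← coe_sumIdeal]; exact SetLike.mem_coe.mpr hs
  have ht' : t ∈ (P₂ : Set A) + (Q : Set A) := by
    rw [← coe_sumIdeal]; exact SetLike.mem_coe.mpr ht
  rw [Set.mem_add] at hs' ht'
  obtain ⟨p, hp, q, hq, rfl⟩ := hs'
  obtain ⟨p', hp', q', hq', rfl⟩ := ht'
  have hexp : (p + q) * (p' + q') = p * p' + (p * q' + (q * p' + q * q')) := by noncomm_ring
  rw [hexp]
  exact Set.add_mem_add ⟨P₁.mul_mem_right _ _ hp, P₂.mul_mem_left _ _ hp'⟩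
    (Q.add_mem (Q.mul_mem_left _ _ hq') (Q.add_mem (Q.mul_mem_right _ _ hq)
      (Q.mul_mem_right _ _ hq)))

/-- intersection of a finite family of two-sided ideals -/
def interIdeal {m : ℕ} (P : Fin m → TwoSidedIdeal A) : TwoSidedIdeal A :=
  .mk' (⋂ i, (P i : Set A))
    (Set.mem_iInter.mpr fun i => (P i).zero_mem)
    (fun hx hy => Set.mem_iInter.mpr fun i =>
      (P i).add_mem (Set.mem_iInter.mp hx i) (Set.mem_iInter.mp hy i))
    (fun hx => Set.mem_iInter.mpr fun i => (P i).neg_mem (Set.mem_iInter.mp hx i))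
    (fun {x y} hy => Set.mem_iInter.mpr fun i => (P i).mul_mem_left x y (Set.mem_iInter.mp hy i))
    (fun {x y} hx => Set.mem_iInter.mpr fun i => (P i).mul_mem_right x y (Set.mem_iInter.mp hx i))

lemma coe_interIdeal {m : ℕ} (P : Fin m → TwoSidedIdeal A) :
    (interIdeal P : Set A) = ⋂ i, (P i : Set A) :=
  TwoSidedIdeal.coe_mk' _ _ _ _ _ _

lemma inter_lemma : ∀ {m : ℕ} (P : Fin (m + 1) → TwoSidedIdeal A) (Q : TwoSidedIdeal A) {a : A},
    (∀ i, a ∈ closure ((P i : Set A) + (Q : Set A))) →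
    a ∈ closure ((⋂ i, (P i : Set A)) + (Q : Set A)) := by
  intro m
  induction m with
  | zero =>
    intro P Q a h
    have : (⋂ i, (P i : Set A)) = (P 0 : Set A) :=
      Set.Subset.antisymm (Set.iInter_subset _ 0)
        (Set.subset_iInter fun i => by rw [Fin.eq_zero i])
    rw [this]
    exact h 0
  | succ m ih =>
    intro P Q a h
    have h1 := ih (fun i => P i.castSucc) Q (fun i => h i.castSucc)
    have h2 := h (Fin.last (m + 1))
    have h3 := pair_lemma (interIdeal fun i => P i.castSucc) (P (Fin.last (m + 1))) Q
      (by rwa [coe_interIdeal]) h2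
    have heq : ((interIdeal fun i : Fin (m+1) => P i.castSucc : TwoSidedIdeal A) : Set A)
        ∩ (P (Fin.last (m + 1)) : Set A) = ⋂ i, (P i : Set A) := by
      rw [coe_interIdeal]
      ext x
      simp only [Set.mem_inter_iff, Set.mem_iInter]
      constructor
      · rintro ⟨hx, hlast⟩ i
        refine Fin.lastCases ?_ ?_ i
        · exact hlast
        · exact fun j => hx j
      · intro hx
        exact ⟨fun j => hx _, hx _⟩
    rwa [heq] at h3

section ModuleLevel

variable {X : Type*} [NormedAddCommGroup X] [Module ℂ X] [SMul Aᵐᵒᵖ X] [RightCStarModule A X]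

namespace RCM

lemma inner_add_right {x y z : X} : inner A x (y + z) = inner A x y + inner A x z :=
  RightCStarModule.inner_add_right
lemma inner_self_nonneg {x : X} : 0 ≤ inner A x x := RightCStarModule.inner_self_nonneg
lemma inner_self {x : X} : inner A x x = 0 ↔ x = 0 := RightCStarModule.inner_self
lemma inner_op_smul_right {a : A} {x y : X} : inner A x (y <• a) = inner A x y * a :=
  RightCStarModule.inner_op_smul_right
lemma inner_smul_right_complex {z : ℂ} {x y : X} : inner A x (z • y) = z • inner A x y :=
  RightCStarModule.inner_smul_right_complex
lemma star_inner (x y : X) : star (inner A x y) = inner A y x := RightCStarModule.star_inner x y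
lemma norm_eq_sqrt_norm_inner_self (x : X) : ‖x‖ = √‖inner A x x‖ :=
  RightCStarModule.norm_eq_sqrt_norm_inner_self x

lemma inner_zero_right {x : X} : inner A x 0 = 0 := by
  have h := inner_add_right (A := A) (x := x) (y := (0 : X)) (z := 0)
  rw [add_zero] at h
  simpa using h

lemma inner_zero_left {x : X} : inner A 0 x = 0 := by
  rw [← star_inner x 0, inner_zero_right, star_zero]

lemma inner_neg_right {x y : X} : inner A x (-y) = -inner A x y := by
  have h := inner_add_right (A := A) (x := x) (y := y) (z := -y)
  rw [add_neg_cancel, inner_zero_right] at h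
  exact (neg_eq_of_add_eq_zero_right h.symm).symm

lemma inner_sub_right {x y z : X} : inner A x (y - z) = inner A x y - inner A x z := by
  rw [sub_eq_add_neg, inner_add_right, inner_neg_right, ← sub_eq_add_neg]

lemma inner_sub_left {x y z : X} : inner A (x - y) z = inner A x z - inner A y z := by
  rw [← star_inner z (x - y), inner_sub_right, star_sub, star_inner, star_inner]

lemma inner_op_smul_left {a : A} {x y : X} : inner A (x <• a) y = star a * inner A x y := by
  rw [← star_inner y (x <• a), inner_op_smul_right, star_mul, star_inner]

lemma inner_smul_left_complex {z : ℂ} {x y : X} : inner A (z • x) y = star z • inner A x y := by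
  rw [← star_inner y (z • x), inner_smul_right_complex, star_smul, star_inner]

lemma inner_smul_right_real {r : ℝ} {x y : X} : inner A x (r • y) = r • inner A x y := by
  rw [← Complex.coe_smul, inner_smul_right_complex, Complex.coe_smul]

lemma inner_smul_left_real {r : ℝ} {x y : X} : inner A (r • x) y = r • inner A x y := by
  rw [← Complex.coe_smul, inner_smul_left_complex, Complex.star_def, Complex.conj_ofReal,
    Complex.coe_smul]

variable (A) in
lemma norm_sq_eq {x : X} : ‖x‖ ^ 2 = ‖inner A x x‖ := by
  rw [norm_eq_sqrt_norm_inner_self (A := A) x, Real.sq_sqrt (norm_nonneg _)]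

lemma inner_mul_inner_swap_le {x y : X} :
    inner A y x * inner A x y ≤ ‖x‖ ^ 2 • inner A y y := by
  rcases eq_or_ne x 0 with h | h
  · simp [h, inner_zero_right, inner_zero_left]
  · have hpos : 0 < ‖x‖ := norm_pos_iff.mpr h
    have h₁ : ∀ (a : A),
        (0 : A) ≤ ‖x‖ ^ 2 • (star a * a) - ‖x‖ ^ 2 • (star a * inner A x y)
                  - ‖x‖ ^ 2 • (inner A y x * a) + ‖x‖ ^ 2 • (‖x‖ ^ 2 • inner A y y) := fun a => by
      calc (0 : A) ≤ inner A (x <• a - ‖x‖ ^ 2 • y) (x <• a - ‖x‖ ^ 2 • y) := by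
                      exact inner_self_nonneg
            _ = star a * inner A x x * a - ‖x‖ ^ 2 • (star a * inner A x y)
                  - ‖x‖ ^ 2 • (inner A y x * a) + ‖x‖ ^ 2 • (‖x‖ ^ 2 • inner A y y) := by
                      simp only [inner_sub_right, inner_op_smul_right, inner_sub_left,
                        inner_op_smul_left, inner_smul_left_real, mul_sub, sub_mul, mul_smul_comm,
                        inner_smul_right_real, smul_sub, mul_assoc, smul_mul_assoc]
                      abel
            _ ≤ ‖x‖ ^ 2 • (star a * a) - ‖x‖ ^ 2 • (star a * inner A x y)
                  - ‖x‖ ^ 2 • (inner A y x * a) + ‖x‖ ^ 2 • (‖x‖ ^ 2 • inner A y y) := by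
                      gcongr
                      calc _ ≤ ‖inner A x x‖ • (star a * a) :=
                          CStarAlgebra.star_left_conjugate_le_norm_smul (star_inner x x)
                        _ = ‖x‖ ^ 2 • (star a * a) := by rw [norm_sq_eq A]
    specialize h₁ (inner A x y)
    simp only [star_inner, sub_self, zero_sub, le_neg_add_iff_add_le, add_zero] at h₁
    rwa [smul_le_smul_iff_of_pos_left (pow_pos hpos _)] at h₁

lemma norm_inner_le {x y : X} : ‖inner A x y‖ ≤ ‖x‖ * ‖y‖ := by
  have := calc ‖inner A x y‖ ^ 2 = ‖inner A y x * inner A x y‖ := by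
                rw [← star_inner x y, CStarRing.norm_star_mul_self, pow_two]
    _ ≤ ‖‖x‖ ^ 2 • inner A y y‖ := by
                refine CStarAlgebra.norm_le_norm_of_nonneg_of_le ?_ inner_mul_inner_swap_le
                rw [← star_inner x y]
                exact star_mul_self_nonneg _
    _ = ‖x‖ ^ 2 * ‖inner A y y‖ := by
                rw [norm_smul, Real.norm_eq_abs, abs_of_nonneg (by positivity)]
    _ = ‖x‖ ^ 2 * ‖y‖ ^ 2 := by rw [norm_sq_eq A (x := y)]
    _ = (‖x‖ * ‖y‖) ^ 2 := by rw [mul_pow]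
  exact (pow_le_pow_iff_left₀ (norm_nonneg _) (by positivity) two_ne_zero).mp this

lemma continuous_inner_right (w : X) : Continuous fun y : X => inner A w y :=
  AddMonoidHomClass.continuous_of_bound
    ({ toFun := fun y => inner A w y, map_zero' := inner_zero_right,
       map_add' := fun _ _ => inner_add_right } : X →+ A) ‖w‖ fun _ => norm_inner_le

/-- the normed space structure -/
abbrev normedSpace : NormedSpace ℂ X where
  norm_smul_le c x := le_of_eq <| by
    rw [norm_eq_sqrt_norm_inner_self (A := A) (c • x), norm_eq_sqrt_norm_inner_self (A := A) x,
      inner_smul_left_complex, inner_smul_right_complex, norm_smul, norm_smul, norm_star,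
      ← mul_assoc, Real.sqrt_mul (by positivity), Real.sqrt_mul_self (norm_nonneg _)]

end RCM

lemma ext_inner {y y' : X} (h : ∀ w : X, (inner A w y : A) = inner A w y') : y = y' := by
  have h0 : (inner A (y - y') (y - y') : A) = 0 := by
    rw [RCM.inner_sub_right, h (y - y'), sub_self]
  exact sub_eq_zero.mp (RCM.inner_self.mp h0)

lemma op_smul_add (x : X) (a b : A) : x <• (a + b) = x <• a + x <• b :=
  ext_inner (A := A) fun w => by
    simp only [RCM.inner_op_smul_right, RCM.inner_add_right, mul_add]

lemma op_smul_sub (x : X) (a b : A) : x <• (a - b) = x <• a - x <• b :=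
  ext_inner (A := A) fun w => by
    simp only [RCM.inner_op_smul_right, RCM.inner_sub_right, mul_sub]

lemma norm_op_smul_le (x : X) (a : A) : ‖x <• a‖ ≤ ‖x‖ * ‖a‖ := by
  have h1 : ‖x <• a‖ ^ 2 = ‖star a * (inner A x x : A) * a‖ := by
    rw [RCM.norm_sq_eq A, RCM.inner_op_smul_right, RCM.inner_op_smul_left, mul_assoc]
  have h2 : ‖x <• a‖ ^ 2 ≤ (‖x‖ * ‖a‖) ^ 2 := by
    rw [h1]
    calc ‖star a * (inner A x x : A) * a‖ ≤ ‖star a * (inner A x x : A)‖ * ‖a‖ := norm_mul_le _ _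
      _ ≤ ‖star a‖ * ‖(inner A x x : A)‖ * ‖a‖ := by gcongr; exact norm_mul_le _ _
      _ = ‖a‖ * (‖x‖ ^ 2) * ‖a‖ := by rw [norm_star, RCM.norm_sq_eq A]
      _ = (‖x‖ * ‖a‖) ^ 2 := by ring
  exact (pow_le_pow_iff_left₀ (norm_nonneg _) (by positivity) two_ne_zero).mp h2

/-- the span inside the module -/
def sisSub (S : Set A) : Submodule ℂ X :=
  Submodule.span ℂ {z : X | ∃ k ∈ S, ∃ x : X, z = x <• k}

lemma sIS_eq_closure (S : Set A) :
    smulIdealSpan X S = closure ((sisSub (A := A) (X := X) S : Set X)) := rfl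

lemma isClosed_sIS (S : Set A) : IsClosed (smulIdealSpan X S) := isClosed_closure

lemma sIS_mono {S T : Set A} (h : S ⊆ T) :
    smulIdealSpan X S ⊆ smulIdealSpan X T := by
  refine closure_mono (Submodule.span_mono fun z hz => ?_)
  obtain ⟨k, hk, x, rfl⟩ := hz
  exact ⟨k, h hk, x, rfl⟩

lemma gen_mem_sIS {S : Set A} {k : A} (hk : k ∈ S) (x : X) :
    x <• k ∈ smulIdealSpan X S :=
  subset_closure (Submodule.subset_span ⟨k, hk, x, rfl⟩)

lemma zero_mem_sIS (S : Set A) : (0 : X) ∈ smulIdealSpan X S :=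
  subset_closure (Submodule.zero_mem _)

lemma sIS_submodule (S : Set A) : ∃ M : Submodule ℂ X,
    (M : Set X) = smulIdealSpan X S ∧ IsClosed (M : Set X) := by
  letI : NormedSpace ℂ X := RCM.normedSpace (A := A)
  refine ⟨(sisSub (A := A) (X := X) S).topologicalClosure, ?_, ?_⟩
  · rfl
  · exact Submodule.isClosed_topologicalClosure _

lemma sub_mem_sIS {S : Set A} {x y : X} (hx : x ∈ smulIdealSpan X S)
    (hy : y ∈ smulIdealSpan X S) : x - y ∈ smulIdealSpan X S := by
  obtain ⟨M, hM, -⟩ := sIS_submodule (A := A) (X := X) S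
  rw [← hM] at hx hy ⊢
  exact M.sub_mem hx hy

lemma add_mem_sIS {S : Set A} {x y : X} (hx : x ∈ smulIdealSpan X S)
    (hy : y ∈ smulIdealSpan X S) : x + y ∈ smulIdealSpan X S := by
  obtain ⟨M, hM, -⟩ := sIS_submodule (A := A) (X := X) S
  rw [← hM] at hx hy ⊢
  exact M.add_mem hx hy

lemma inner_mem_of_mem_sIS (I : TwoSidedIdeal A) {z : X}
    (hz : z ∈ smulIdealSpan X (I : Set A)) (w : X) :
    (inner A w z : A) ∈ closure (I : Set A) := by
  letI : NormedSpace ℂ X := RCM.normedSpace (A := A)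
  set C := closureIdeal I with hC_def
  have hC : IsClosed ((C : Set A)) := isClosed_closureIdeal I
  have hspan : ∀ y ∈ sisSub (A := A) (X := X) (I : Set A), (inner A w y : A) ∈ C := by
    intro y hy
    induction hy using Submodule.span_induction with
    | mem x hx =>
      obtain ⟨k, hk, x', rfl⟩ := hx
      rw [RCM.inner_op_smul_right]
      exact C.mul_mem_left _ _ (mem_closureIdeal.mpr (subset_closure hk))
    | zero => rw [RCM.inner_zero_right]; exact C.zero_mem
    | add x y hx hy ihx ihy => rw [RCM.inner_add_right]; exact C.add_mem ihx ihy
    | smul c x hx ih =>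
      rw [RCM.inner_smul_right_complex]
      exact smul_mem_closed C hC c ih
  have hcont : Continuous fun y : X => (inner A w y : A) := RCM.continuous_inner_right (A := A) w
  have hmem := closure_minimal (fun y hy => hspan y hy : (sisSub (A := A) (X := X) (I : Set A)
      : Set X) ⊆ (fun y : X => (inner A w y : A)) ⁻¹' (C : Set A))
    (hC.preimage hcont) hz
  rwa [← coe_closureIdeal]

lemma csub_mem_W (P Q : TwoSidedIdeal A) {z u v : X}
    (hz : (inner A z z : A) ∈ closure ((P : Set A) + (Q : Set A)))
    (hu : u ∈ smulIdealSpan X (P : Set A)) (hv : v ∈ smulIdealSpan X (Q : Set A)) :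
    (inner A (z - u - v) (z - u - v) : A) ∈ closure ((P : Set A) + (Q : Set A)) := by
  set W := closureIdeal (sumIdeal P Q) with hW_def
  have hW_coe : (W : Set A) = closure ((P : Set A) + (Q : Set A)) := by
    rw [hW_def, coe_closureIdeal, coe_sumIdeal]
  have hW_cl : IsClosed ((W : Set A)) := isClosed_closureIdeal _
  have hPsub : (P : Set A) ⊆ (P : Set A) + (Q : Set A) := fun p hp =>
    Set.mem_add.mpr ⟨p, hp, 0, Q.zero_mem, add_zero p⟩
  have hQsub : (Q : Set A) ⊆ (P : Set A) + (Q : Set A) := fun q hq =>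
    Set.mem_add.mpr ⟨0, P.zero_mem, q, hq, zero_add q⟩
  set s : X := u + v with hs_def
  have hws : ∀ w : X, (inner A w s : A) ∈ W := by
    intro w
    rw [hs_def, RCM.inner_add_right]
    refine W.add_mem ?_ ?_
    · rw [SetLike.mem_coe (p := W) |>.symm, hW_coe]
      exact closure_mono hPsub (inner_mem_of_mem_sIS P hu w)
    · rw [SetLike.mem_coe (p := W) |>.symm, hW_coe]
      exact closure_mono hQsub (inner_mem_of_mem_sIS Q hv w)
  have hsw : ∀ w : X, (inner A s w : A) ∈ W := by
    intro w
    rw [← RCM.star_inner]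
    exact star_mem_closed W hW_cl (hws w)
  have hzz : (inner A z z : A) ∈ W := by
    rw [SetLike.mem_coe (p := W) |>.symm, hW_coe]; exact hz
  have hexp : (inner A (z - s) (z - s) : A)
      = ((inner A z z : A) - inner A z s) - ((inner A s z : A) - inner A s s) := by
    rw [RCM.inner_sub_left, RCM.inner_sub_right, RCM.inner_sub_right]
  have hmem : (inner A (z - s) (z - s) : A) ∈ W := by
    rw [hexp]
    exact W.sub_mem (W.sub_mem hzz (hws z)) (W.sub_mem (hsw z) (hsw s))
  rw [← hW_coe]
  rw [show z - u - v = z - s by rw [hs_def, sub_sub]]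
  exact hmem

lemma mod_key_norm {δ : ℝ} (hδ : 0 < δ) (z : X) :
    ‖z - z <• cfcₙ (af δ) (inner A z z : A)‖ ≤ Real.sqrt δ / 2 := by
  set h : A := inner A z z with hh_def
  have hh : 0 ≤ h := RCM.inner_self_nonneg
  set c : A := cfcₙ (af δ) h with hc_def
  have hcsa : IsSelfAdjoint c := IsSelfAdjoint.cfcₙ
  have hexp : (inner A (z - z <• c) (z - z <• c) : A) = h - h * c - c * h + c * h * c := by
    rw [RCM.inner_sub_right, RCM.inner_sub_left, RCM.inner_sub_left,
      RCM.inner_op_smul_right, RCM.inner_op_smul_left,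
      RCM.inner_op_smul_left, RCM.inner_op_smul_right, hcsa.star_eq, ← hh_def]
    rw [← mul_assoc]
    abel
  have h2 : ‖z - z <• c‖ ^ 2 ≤ δ / 4 := by
    rw [RCM.norm_sq_eq A, hexp]
    exact key_bound hδ hh
  have h3 : ‖z - z <• c‖ ^ 2 ≤ (Real.sqrt δ / 2) ^ 2 := by
    rwa [div_pow, Real.sq_sqrt hδ.le, show (2:ℝ)^2 = 4 by norm_num]
  exact (pow_le_pow_iff_left₀ (norm_nonneg _) (by positivity) two_ne_zero).mp h3

lemma mod_split_approx (P Q : TwoSidedIdeal A) (hP : IsClosed (P : Set A)) {z : X}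
    (hz : (inner A z z : A) ∈ closure ((P : Set A) + (Q : Set A))) {ε : ℝ} (hε : 0 < ε) :
    ∃ u ∈ smulIdealSpan X (P : Set A), ∃ v ∈ smulIdealSpan X (Q : Set A),
      ‖z - u - v‖ < ε ∧ ‖u‖ ≤ 2 * ‖z‖ ∧ ‖v‖ ≤ 2 * ‖z‖ := by
  set h : A := inner A z z with hh_def
  have hh : 0 ≤ h := RCM.inner_self_nonneg
  set W := closureIdeal (sumIdeal P Q) with hW_def
  have hW_coe : (W : Set A) = closure ((P : Set A) + (Q : Set A)) := by
    rw [hW_def, coe_closureIdeal, coe_sumIdeal]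
  have hW_cl : IsClosed ((W : Set A)) := isClosed_closureIdeal _
  have hhW : h ∈ W := by rw [SetLike.mem_coe (p := W) |>.symm, hW_coe]; exact hz
  have hδ : (0:ℝ) < ε ^ 2 := by positivity
  set c : A := cfcₙ (af (ε ^ 2)) h with hc_def
  have hcW : c ∈ closure ((P : Set A) + (Q : Set A)) := by
    rw [← hW_coe]
    exact SetLike.mem_coe.mpr <| cfcn_mem W hW_cl hh.isSelfAdjoint hhW (af_cont hδ) (af_zero _)
  have hc1 : ‖c‖ ≤ 1 := norm_cfcₙ_le fun t ht => by
    rw [Real.norm_eq_abs]; exact af_abs_le hδ t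
  have hzc : ‖z - z <• c‖ ≤ ε / 2 := by
    have := mod_key_norm (A := A) hδ z
    rwa [Real.sqrt_sq hε.le, ← hh_def, ← hc_def] at this
  set ε' : ℝ := min (ε / (2 * (‖z‖ + 1))) 1 with hε'_def
  have hε' : 0 < ε' := by
    rw [hε'_def]
    exact lt_min (by positivity) one_pos
  obtain ⟨p, hp, q, hq, hnear, hpn, hqn⟩ := split_approx P Q hP hcW hε'
  refine ⟨z <• p, gen_mem_sIS hp z, z <• q, gen_mem_sIS hq z, ?_, ?_, ?_⟩
  · have h1 : z <• c - z <• p - z <• q = z <• (c - p - q) := by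
      rw [op_smul_sub, op_smul_sub]
    have h2 : ‖z <• (c - p - q)‖ ≤ ‖z‖ * ‖c - p - q‖ := norm_op_smul_le z _
    have h3 : ‖z‖ * ‖c - p - q‖ < ε / 2 := by
      rcases eq_or_lt_of_le (norm_nonneg z) with hz0 | hz0
      · rw [← hz0, zero_mul]; positivity
      · calc ‖z‖ * ‖c - p - q‖ < ‖z‖ * ε' := by
              exact (mul_lt_mul_iff_right₀ hz0).mpr hnear
          _ ≤ ‖z‖ * (ε / (2 * (‖z‖ + 1))) := by
              refine mul_le_mul_of_nonneg_left (min_le_left _ _) (norm_nonneg z)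
          _ = (‖z‖ * ε) / (2 * (‖z‖ + 1)) := (mul_div_assoc _ _ _).symm
          _ < ε / 2 := by
              rw [div_lt_div_iff₀ (by positivity) (by norm_num : (0:ℝ) < 2)]
              nlinarith [norm_nonneg z, hε]
    calc ‖z - z <• p - z <• q‖
        = ‖(z - z <• c) + (z <• c - z <• p - z <• q)‖ := by congr 1; abel
      _ ≤ ‖z - z <• c‖ + ‖z <• c - z <• p - z <• q‖ := norm_add_le _ _
      _ < ε / 2 + ε / 2 := by
          rw [h1]
          exact add_lt_add_of_le_of_lt hzc (lt_of_le_of_lt h2 h3)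
      _ = ε := by ring
  · calc ‖z <• p‖ ≤ ‖z‖ * ‖p‖ := norm_op_smul_le z p
      _ ≤ ‖z‖ * 1 := mul_le_mul_of_nonneg_left (hpn.trans hc1) (norm_nonneg z)
      _ ≤ 2 * ‖z‖ := by nlinarith [norm_nonneg z]
  · have hq2 : ‖q‖ ≤ 2 := by
      have : ε' ≤ 1 := min_le_right _ _
      linarith [hqn, hc1]
    calc ‖z <• q‖ ≤ ‖z‖ * ‖q‖ := norm_op_smul_le z q
      _ ≤ ‖z‖ * 2 := mul_le_mul_of_nonneg_left hq2 (norm_nonneg z)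
      _ = 2 * ‖z‖ := by ring

lemma mod_split [CompleteSpace X] (P Q : TwoSidedIdeal A) (hP : IsClosed (P : Set A)) {z : X}
    (hz : (inner A z z : A) ∈ closure ((P : Set A) + (Q : Set A))) :
    ∃ u ∈ smulIdealSpan X (P : Set A), ∃ v ∈ smulIdealSpan X (Q : Set A), z = u + v := by
  letI : NormedSpace ℂ X := RCM.normedSpace (A := A)
  classical
  set D : Set X := {w : X | (inner A w w : A) ∈ closure ((P : Set A) + (Q : Set A))} with hD_def
  have happrox : ∀ w : {w : X // w ∈ D}, ∀ k : ℕ, ∃ uv : X × X,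
      uv.1 ∈ smulIdealSpan X (P : Set A) ∧ uv.2 ∈ smulIdealSpan X (Q : Set A) ∧
      ‖w.1 - uv.1 - uv.2‖ < (1/2 : ℝ)^(k+1) ∧ ‖uv.1‖ ≤ 2*‖w.1‖ ∧ ‖uv.2‖ ≤ 2*‖w.1‖ := by
    intro w k
    obtain ⟨u, hu, v, hv, h1, h2, h3⟩ := mod_split_approx P Q hP w.2
      (by positivity : (0:ℝ) < (1/2:ℝ)^(k+1))
    exact ⟨(u, v), hu, hv, h1, h2, h3⟩
  choose Φ hΦ1 hΦ2 hΦ3 hΦ4 hΦ5 using happrox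
  let F : ℕ → {w : X // w ∈ D} := fun k => Nat.rec ⟨z, hz⟩
    (fun k Wk => ⟨Wk.1 - (Φ Wk k).1 - (Φ Wk k).2,
      csub_mem_W P Q Wk.2 (hΦ1 Wk k) (hΦ2 Wk k)⟩) k
  let u : ℕ → X := fun k => (Φ (F k) k).1
  let v : ℕ → X := fun k => (Φ (F k) k).2
  have hFsucc : ∀ k, (F (k+1)).1 = (F k).1 - u k - v k := fun k => rfl
  have hF0 : (F 0).1 = z := rfl
  have hu_mem : ∀ k, u k ∈ smulIdealSpan X (P : Set A) := fun k => hΦ1 (F k) k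
  have hv_mem : ∀ k, v k ∈ smulIdealSpan X (Q : Set A) := fun k => hΦ2 (F k) k
  have hFnorm : ∀ k, ‖(F (k+1)).1‖ ≤ (1/2 : ℝ)^(k+1) := fun k => by
    rw [hFsucc]
    exact (hΦ3 (F k) k).le
  have hubound : ∀ k, ‖u (k+1)‖ ≤ 2 * (1/2 : ℝ)^(k+1) := fun k => by
    calc ‖u (k+1)‖ ≤ 2 * ‖(F (k+1)).1‖ := hΦ4 (F (k+1)) (k+1)
      _ ≤ 2 * (1/2:ℝ)^(k+1) := by have := hFnorm k; linarith
  have hvbound : ∀ k, ‖v (k+1)‖ ≤ 2 * (1/2 : ℝ)^(k+1) := fun k => by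
    calc ‖v (k+1)‖ ≤ 2 * ‖(F (k+1)).1‖ := hΦ5 (F (k+1)) (k+1)
      _ ≤ 2 * (1/2:ℝ)^(k+1) := by have := hFnorm k; linarith
  have hgeo0 : Summable (fun k : ℕ => (1/2 : ℝ)^k) :=
    summable_geometric_of_lt_one (by norm_num) (by norm_num)
  have hgeo : Summable (fun k : ℕ => 2 * (1/2 : ℝ)^(k+1)) :=
    Summable.mul_left 2 ((summable_nat_add_iff 1).mpr hgeo0)
  have hsum_u : Summable u := by
    refine Summable.of_norm ?_
    rw [← summable_nat_add_iff 1]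
    exact Summable.of_nonneg_of_le (fun k => norm_nonneg _) (fun k => hubound k) hgeo
  have hsum_v : Summable v := by
    refine Summable.of_norm ?_
    rw [← summable_nat_add_iff 1]
    exact Summable.of_nonneg_of_le (fun k => norm_nonneg _) (fun k => hvbound k) hgeo
  set U : X := ∑' k, u k with hU_def
  set V : X := ∑' k, v k with hV_def
  obtain ⟨M, hM, hMc⟩ := sIS_submodule (A := A) (X := X) (P : Set A)
  have hU_mem : U ∈ smulIdealSpan X (P : Set A) := by
    rw [← hM]
    refine hMc.mem_of_tendsto hsum_u.hasSum.tendsto_sum_nat (Eventually.of_forall fun n => ?_)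
    exact M.sum_mem fun i _ => by
      have := hu_mem i; rw [← hM] at this; exact this
  obtain ⟨N, hN, hNc⟩ := sIS_submodule (A := A) (X := X) (Q : Set A)
  have hV_mem : V ∈ smulIdealSpan X (Q : Set A) := by
    rw [← hN]
    refine hNc.mem_of_tendsto hsum_v.hasSum.tendsto_sum_nat (Eventually.of_forall fun n => ?_)
    exact N.sum_mem fun i _ => by
      have := hv_mem i; rw [← hN] at this; exact this
  have htel : ∀ k, z - (∑ i ∈ Finset.range k, (u i + v i)) = (F k).1 := by
    intro k
    induction k with
    | zero => simp [hF0]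
    | succ k ih =>
      rw [Finset.sum_range_succ, hFsucc, ← ih]
      abel
  have hF_to_zero : Tendsto (fun k => (F k).1) atTop (𝓝 0) := by
    refine squeeze_zero_norm' ?_ (tendsto_pow_atTop_nhds_zero_of_lt_one (by norm_num)
      (by norm_num) : Tendsto (fun k : ℕ => (1/2:ℝ)^k) atTop (𝓝 0))
    filter_upwards [eventually_ge_atTop 1] with k hk
    obtain ⟨j, rfl⟩ : ∃ j, k = j + 1 := ⟨k - 1, by omega⟩
    exact hFnorm j
  have hsum_add : Tendsto (fun k => ∑ i ∈ Finset.range k, (u i + v i)) atTop (𝓝 (U + V)) := by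
    have := (hsum_u.hasSum.add hsum_v.hasSum).tendsto_sum_nat
    simpa [Finset.sum_add_distrib] using this
  have hz_lim : Tendsto (fun k => ∑ i ∈ Finset.range k, (u i + v i)) atTop (𝓝 z) := by
    have h1 : Tendsto (fun k => z - (F k).1) atTop (𝓝 (z - 0)) :=
      tendsto_const_nhds.sub hF_to_zero
    rw [sub_zero] at h1
    refine h1.congr fun k => ?_
    rw [← htel k]
    abel
  exact ⟨U, hU_mem, V, hV_mem, (tendsto_nhds_unique hsum_add hz_lim).symm⟩

lemma glue [CompleteSpace X] : ∀ (m : ℕ) (P : Fin (m+1) → TwoSidedIdeal A)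
    (_ : ∀ i, IsClosed ((P i : Set A))) (b : Fin (m+1) → X)
    (_ : ∀ i j, b i - b j ∈ smulIdealSpan X ((P i ⊔ P j : TwoSidedIdeal A) : Set A)),
    ∃ x : X, ∀ i, x - b i ∈ smulIdealSpan X ((P i : Set A)) := by
  intro m
  induction m with
  | zero =>
    intro P hcl b hcomp
    refine ⟨b 0, fun i => ?_⟩
    rw [Fin.eq_zero i, sub_self]
    exact zero_mem_sIS _
  | succ m ih =>
    intro P hcl b hcomp
    obtain ⟨y, hy⟩ := ih (fun i => P i.castSucc) (fun i => hcl _) (fun i => b i.castSucc)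
      (fun i j => hcomp _ _)
    set l : Fin (m + 2) := Fin.last (m + 1) with hl_def
    set Q : TwoSidedIdeal A := P l with hQ_def
    have hyl : ∀ i : Fin (m+1),
        y - b l ∈ smulIdealSpan X ((P i.castSucc ⊔ Q : TwoSidedIdeal A) : Set A) := by
      intro i
      have h1 : y - b i.castSucc ∈ smulIdealSpan X ((P i.castSucc : Set A)) := hy i
      have h2 := hcomp i.castSucc l
      have h3 : (P i.castSucc : Set A) ⊆ ((P i.castSucc ⊔ Q : TwoSidedIdeal A) : Set A) :=
        fun a ha => (le_sup_left : P i.castSucc ≤ P i.castSucc ⊔ Q) ha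
      have h4 := add_mem_sIS (sIS_mono h3 h1) h2
      rwa [show (y - b i.castSucc) + (b i.castSucc - b l) = y - b l by abel] at h4
    have hinner : ∀ i : Fin (m+1), (inner A (y - b l) (y - b l) : A)
        ∈ closure ((P i.castSucc : Set A) + (Q : Set A)) := by
      intro i
      have h5 := inner_mem_of_mem_sIS _ (hyl i) (y - b l)
      rwa [coe_sup_eq] at h5
    have hkey := inter_lemma (fun i => P i.castSucc) Q hinner
    have hkey' : (inner A (y - b l) (y - b l) : A)
        ∈ closure (((interIdeal fun i : Fin (m+1) => P i.castSucc) : Set A) + (Q : Set A)) := by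
      rwa [coe_interIdeal]
    have hclR : IsClosed ((interIdeal fun i : Fin (m+1) => P i.castSucc : TwoSidedIdeal A)
        : Set A) := by
      rw [coe_interIdeal]; exact isClosed_iInter fun i => hcl _
    obtain ⟨u, hu, v, hv, huv⟩ := mod_split _ Q hclR hkey'
    refine ⟨y - u, fun i => ?_⟩
    refine Fin.lastCases ?_ ?_ i
    · rw [show y - u - b l = (y - b l) - u by abel, huv,
        show u + v - u = v by abel]
      exact hv
    · intro j
      have h1 : u ∈ smulIdealSpan X ((P j.castSucc : Set A)) := by
        refine sIS_mono ?_ hu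
        rw [coe_interIdeal]
        exact Set.iInter_subset _ j
      have h6 := sub_mem_sIS (hy j) h1
      rwa [show (y - b j.castSucc) - u = (y - u) - b j.castSucc by abel] at h6

end ModuleLevel

end

end Stmt4

open Stmt4 in
theorem statement4
    {A : Type*} [NonUnitalCStarAlgebra A]
    [PartialOrder A] [StarOrderedRing A]
    {X : Type*} [NormedAddCommGroup X] [Module ℂ X] [SMul Aᵐᵒᵖ X]
    [RightCStarModule A X] [CompleteSpace X]
    (n : ℕ) (hn : 1 ≤ n)
    (J : Fin n → TwoSidedIdeal A)
    (hJclosed : ∀ i, IsClosed ((J i : Set A)))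
    (hJinter : ∀ a : A, (∀ i, a ∈ J i) → a = 0) :
    ∀ b : Fin n → X,
      ((∃ x : X, ∀ i, x - b i ∈ smulIdealSpan X (J i : Set A)) ↔
        (∀ i j, b i - b j ∈ smulIdealSpan X ((J i ⊔ J j : TwoSidedIdeal A) : Set A))) ∧
      (∀ x x' : X, (∀ i, x - b i ∈ smulIdealSpan X (J i : Set A)) →
        (∀ i, x' - b i ∈ smulIdealSpan X (J i : Set A)) → x = x') := by
  obtain ⟨m, rfl⟩ : ∃ m, n = m + 1 := ⟨n - 1, by omega⟩
  intro b
  constructor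
  · constructor
    · rintro ⟨x, hx⟩ i j
      have h1 : (J i : Set A) ⊆ ((J i ⊔ J j : TwoSidedIdeal A) : Set A) :=
        fun a ha => (le_sup_left : J i ≤ J i ⊔ J j) ha
      have h2 : (J j : Set A) ⊆ ((J i ⊔ J j : TwoSidedIdeal A) : Set A) :=
        fun a ha => (le_sup_right : J j ≤ J i ⊔ J j) ha
      have h3 := sub_mem_sIS (sIS_mono h2 (hx j)) (sIS_mono h1 (hx i))
      rwa [show (x - b j) - (x - b i) = b i - b j by abel] at h3
    · intro hcomp
      exact glue m J hJclosed b hcomp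
  · intro x x' hx hx'
    have hmem : ∀ i, x - x' ∈ smulIdealSpan X (J i : Set A) := fun i => by
      have h4 := sub_mem_sIS (hx i) (hx' i)
      rwa [show (x - b i) - (x' - b i) = x - x' by abel] at h4
    have hinner : ∀ i, (inner A (x - x') (x - x') : A) ∈ J i := fun i => by
      have h5 := inner_mem_of_mem_sIS (J i) (hmem i) (x - x')
      rw [(hJclosed i).closure_eq] at h5
      exact h5
    have h0 : (inner A (x - x') (x - x') : A) = 0 := hJinter _ hinner
    exact sub_eq_zero.mp (RCM.inner_self.mp h0)
end
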